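/- Let E be a finite-dimensional real inner product space, let g : E → ℝ be differentiable and strongly convex with constant μ > 0 in the sense that g(y) ≥ g(x) + ⟪∇g(x), y - x⟫ + μ‖y - x‖² for all x, y ∈ E, and let h : E → ℝ be convex and differentiable. If x₁ is a global minimizer over E of x ↦ g(x) - ⟪∇h(x₀), x - x₀⟫, then (g(x₀) - h(x₀)) - (g(x₁) - h(x₁)) ≥ μ‖x₁ - x₀‖²; that is, each DCA step decreases f = g - h by at least μ times the squared step length. -/

import Mathlib

open RealInnerProductSpace

/-- First-order characterization of convexity for differentiable functions. -/
lemma convex_grad_ineq {E : Type*} [NormedAddCommGroup E] [InnerProductSpace ℝ E] [CompleteSpace E]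
    (h : E → ℝ) (hh : Differentiable ℝ h) (hconv : ConvexOn ℝ Set.univ h)
    (x y : E) : h x + ⟪gradient h x, y - x⟫ ≤ h y := by
  rcases eq_or_ne y x with rfl | hne
  · simp
  set v := y - x with hv
  -- φ t = h (x + t • v)
  set φ : ℝ → ℝ := fun t => h (x + t • v) with hφ
  have hφconv : ConvexOn ℝ Set.univ φ := by
    have : φ = h ∘ (fun t : ℝ => x + t • v) := rfl
    rw [this]
    apply hconv.comp_affineMap (AffineMap.mk (fun t : ℝ => x + t • v)
      (LinearMap.toAffineMap (LinearMap.smulRight (LinearMap.id : ℝ →ₗ[ℝ] ℝ) v)).linear ?_)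
      |>.subset (Set.subset_univ _) (convex_univ)
    intro p q
    simp [add_smul]
    module
  have hline : ∀ t : ℝ, HasDerivAt (fun s : ℝ => x + s • v) v t := by
    intro t
    simpa using ((hasDerivAt_id t).smul_const v).const_add x
  have hderiv : HasDerivAt φ ⟪gradient h x, v⟫ 0 := by
    have hgrad : HasFDerivAt h ((InnerProductSpace.toDual ℝ E) (gradient h x)) (x + (0:ℝ) • v) := by
      simpa using (hh x).hasFDerivAt
    have := hgrad.comp_hasDerivAt (0:ℝ) (hline 0)
    have e : (InnerProductSpace.toDual ℝ E) (gradient h x) v = ⟪gradient h x, v⟫ := by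
      simp [InnerProductSpace.toDual_apply_apply]
    rw [e] at this
    exact this
  have hslope := hφconv.le_slope_of_hasDerivAt (Set.mem_univ 0) (Set.mem_univ 1)
    one_pos hderiv
  have : slope φ 0 1 = h y - h x := by
    simp [slope_def_field, hφ, hv]
  rw [this] at hslope
  linarith

/-- Each DCA step decreases `f = g - h` by at least `μ` times the squared step length. -/
theorem dca_step_sufficient_decrease
    {E : Type*} [NormedAddCommGroup E] [InnerProductSpace ℝ E] [FiniteDimensional ℝ E]
    (g h : E → ℝ) (μ : ℝ) (hμ : 0 < μ)
    (hg : Differentiable ℝ g)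
    (hsc : ∀ x y : E, g y ≥ g x + ⟪gradient g x, y - x⟫ + μ * ‖y - x‖ ^ 2)
    (hh : Differentiable ℝ h) (hconv : ConvexOn ℝ Set.univ h)
    (x₀ x₁ : E)
    (hmin : ∀ x : E,
      g x₁ - ⟪gradient h x₀, x₁ - x₀⟫ ≤ g x - ⟪gradient h x₀, x - x₀⟫) :
    (g x₀ - h x₀) - (g x₁ - h x₁) ≥ μ * ‖x₁ - x₀‖ ^ 2 := by
  set c := gradient h x₀ with hc
  -- x₁ is a local min of φ := g x - ⟪c, x - x₀⟫, so fderiv is zero there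
  set φ : E → ℝ := fun x => g x - ⟪c, x - x₀⟫ with hφ
  have hmin' : IsLocalMin φ x₁ := by
    apply Filter.Eventually.of_forall
    intro x
    exact hmin x
  have hinner : ∀ z : E, HasFDerivAt (fun x : E => ⟪c, x - x₀⟫) (innerSL ℝ c) z := by
    intro z
    have h1 : HasFDerivAt (fun x : E => ⟪c, x⟫) (innerSL ℝ c) z :=
      (innerSL ℝ c).hasFDerivAt
    have h2 : (fun x : E => ⟪c, x - x₀⟫) = fun x : E => ⟪c, x⟫ - ⟪c, x₀⟫ := by
      funext x; rw [inner_sub_right]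
    rw [h2]
    simpa using h1.sub_const ⟪c, x₀⟫
  have hgradg : HasFDerivAt g ((InnerProductSpace.toDual ℝ E) (gradient g x₁)) x₁ :=
    (hg x₁).hasGradientAt
  have hφderiv : HasFDerivAt φ
      (((InnerProductSpace.toDual ℝ E) (gradient g x₁)) - innerSL ℝ c) x₁ :=
    hgradg.sub (hinner x₁)
  have hzero := hmin'.hasFDerivAt_eq_zero hφderiv
  have key : ∀ v : E, ⟪gradient g x₁, v⟫ = ⟪c, v⟫ := by
    intro v
    have := congrArg (fun L : E →L[ℝ] ℝ => L v) hzero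
    simpa [InnerProductSpace.toDual_apply_apply, sub_eq_zero] using this
  have h1 := hsc x₁ x₀
  have h2 := convex_grad_ineq h hh hconv x₀ x₁
  rw [← hc] at h2
  have hkey := key (x₀ - x₁)
  have hneg : ⟪c, x₀ - x₁⟫ = -⟪c, x₁ - x₀⟫ := by
    rw [← inner_neg_right, neg_sub]
  have hnorm : ‖x₀ - x₁‖ = ‖x₁ - x₀‖ := norm_sub_rev _ _
  rw [hkey, hneg, hnorm] at h1
  linarith
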